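/- Iterated homoclinic channels and the explicit formula for the scattering map of a flow: Let Λ be a normally hyperbolic invariant manifold for the flow Φ and Γ a homoclinic channel with scattering map S^Γ. Then for any t_u, t_s > 0 the sets Φ^{−t_u}(Γ) and Φ^{t_s}(Γ) are also homoclinic channels, and the scattering map satisfies S^Γ = Φ^{−t_s} ∘ Ω_+^{Φ^{t_s}(Γ)} ∘ Φ^{t_s+t_u} ∘ (Ω_-^{Φ^{−t_u}(Γ)})^{-1} ∘ Φ^{−t_u}. -/

import Mathlib

noncomputable section

open Set Metric Function

/-- Euclidean space `ℝ^m`, our model for the `m`-dimensional manifold `M`. -/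
abbrev Euc (m : ℕ) : Type := EuclideanSpace ℝ (Fin m)

/-- The tangent space of a set `s` at a point `x`, defined as the linear span of the
tangent cone of `s` at `x`. -/
def tSpace {m : ℕ} (s : Set (Euc m)) (x : Euc m) : Submodule ℝ (Euc m) :=
  Submodule.span ℝ (tangentConeAt ℝ s x)

/-- `U` is a relatively open subset of `A`. -/
def relOpenIn {X : Type*} [TopologicalSpace X] (A U : Set X) : Prop :=
  ∃ V : Set X, IsOpen V ∧ U = V ∩ A
/-- A smooth flow on `ℝ^m`. -/
structure SmoothFlow (m : ℕ) where
  Φ : ℝ → Euc m → Euc m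
  flow_zero : ∀ x, Φ 0 x = x
  flow_add : ∀ s t x, Φ (s + t) x = Φ s (Φ t x)
  smooth : ContDiff ℝ 2 (fun p : ℝ × Euc m => Φ p.1 p.2)

/-- A normally hyperbolic invariant manifold `Λ` for a flow `Φ` on `ℝ^m`, together with all
its defining data: the invariant splitting `E^u ⊕ E^s ⊕ TΛ` and the rates `0 < β < α`. -/
structure FlowNHIM (m : ℕ) extends SmoothFlow m where
  Λ : Set (Euc m)
  compactΛ : IsCompact Λ
  connΛ : IsConnected Λ
  invΛ : ∀ t : ℝ, Φ t '' Λ = Λ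
  n : ℕ
  l : ℕ
  dim_eq : 2 * n + l = m
  Eu : Euc m → Submodule ℝ (Euc m)
  Es : Euc m → Submodule ℝ (Euc m)
  dimEu : ∀ x ∈ Λ, Module.finrank ℝ (Eu x) = n
  dimEs : ∀ x ∈ Λ, Module.finrank ℝ (Es x) = n
  dimT : ∀ x ∈ Λ, Module.finrank ℝ (tSpace Λ x) = l
  C : ℝ
  aRate : ℝ
  bRate : ℝ
  hC : 0 < C
  hb : 0 < bRate
  hba : bRate < aRate
  sup_eq_top : ∀ x ∈ Λ, Eu x ⊔ Es x ⊔ tSpace Λ x = ⊤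
  indep_u : ∀ x ∈ Λ, Eu x ⊓ (Es x ⊔ tSpace Λ x) = ⊥
  indep_s : ∀ x ∈ Λ, Es x ⊓ (Eu x ⊔ tSpace Λ x) = ⊥
  indep_c : ∀ x ∈ Λ, tSpace Λ x ⊓ (Eu x ⊔ Es x) = ⊥
  mapEu : ∀ t : ℝ, ∀ x ∈ Λ, (Eu x).map (fderiv ℝ (Φ t) x : Euc m →ₗ[ℝ] Euc m) = Eu (Φ t x)
  mapEs : ∀ t : ℝ, ∀ x ∈ Λ, (Es x).map (fderiv ℝ (Φ t) x : Euc m →ₗ[ℝ] Euc m) = Es (Φ t x)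
  charEs : ∀ x ∈ Λ, ∀ v : Euc m,
    v ∈ Es x ↔ ∀ t : ℝ, 0 ≤ t →
      ‖fderiv ℝ (Φ t) x v‖ ≤ C * Real.exp (-aRate * t) * ‖v‖
  charEu : ∀ x ∈ Λ, ∀ v : Euc m,
    v ∈ Eu x ↔ ∀ t : ℝ, t ≤ 0 →
      ‖fderiv ℝ (Φ t) x v‖ ≤ C * Real.exp (aRate * t) * ‖v‖
  charT : ∀ x ∈ Λ, ∀ v : Euc m,
    v ∈ tSpace Λ x ↔ ∀ t : ℝ,
      ‖fderiv ℝ (Φ t) x v‖ ≤ C * Real.exp (bRate * |t|) * ‖v‖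

namespace FlowNHIM

variable {m : ℕ}

/-- The stable manifold `W^s(Λ)` of `Λ` for the flow. -/
def Ws (D : FlowNHIM m) : Set (Euc m) :=
  {y | ∃ Cy > 0, ∀ t : ℝ, 0 ≤ t →
    Metric.infDist (D.Φ t y) D.Λ ≤ Cy * Real.exp (-D.aRate * t)}

/-- The unstable manifold `W^u(Λ)` of `Λ` for the flow. -/
def Wu (D : FlowNHIM m) : Set (Euc m) :=
  {y | ∃ Cy > 0, ∀ t : ℝ, t ≤ 0 →
    Metric.infDist (D.Φ t y) D.Λ ≤ Cy * Real.exp (D.aRate * t)}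

/-- The stable fiber `W^s(x)` of a point `x ∈ Λ`. -/
def WsF (D : FlowNHIM m) (x : Euc m) : Set (Euc m) :=
  {y | ∃ Cxy > 0, ∀ t : ℝ, 0 ≤ t →
    dist (D.Φ t y) (D.Φ t x) ≤ Cxy * Real.exp (-D.aRate * t)}

/-- The unstable fiber `W^u(x)` of a point `x ∈ Λ`. -/
def WuF (D : FlowNHIM m) (x : Euc m) : Set (Euc m) :=
  {y | ∃ Cxy > 0, ∀ t : ℝ, t ≤ 0 →
    dist (D.Φ t y) (D.Φ t x) ≤ Cxy * Real.exp (D.aRate * t)}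

/-- The vector field generating the flow. -/
def X (D : FlowNHIM m) (x : Euc m) : Euc m := deriv (fun t => D.Φ t x) 0

end FlowNHIM
/-- A homoclinic channel for a normally hyperbolic invariant manifold `Λ` with stable and
unstable manifolds `Wus`, `Wss` foliated by fibers `WuF`, `WsF`:  an `l`-dimensional
submanifold `Γ ⊆ W^u(Λ) ∩ W^s(Λ)` along which `W^u(Λ)` and `W^s(Λ)` intersect transversally,
satisfying the transverse foliation conditions, and on which the restricted wave maps
`Ω₋, Ω₊` are diffeomorphisms onto open subsets `U₋ = Um`, `U₊ = Up` of `Λ`. -/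
structure Channel (m : ℕ) (Λ Wus Wss : Set (Euc m))
    (WuF WsF : Euc m → Set (Euc m)) (l : ℕ) where
  Γ : Set (Euc m)
  sub : Γ ⊆ Wus ∩ Wss
  dimΓ : ∀ x ∈ Γ, Module.finrank ℝ (tSpace Γ x) = l
  Ωm : Euc m → Euc m
  Ωp : Euc m → Euc m
  footm : ∀ x ∈ Wus, Ωm x ∈ Λ ∧ x ∈ WuF (Ωm x)
  footm_uniq : ∀ x ∈ Wus, ∀ y ∈ Λ, x ∈ WuF y → y = Ωm x
  footp : ∀ x ∈ Wss, Ωp x ∈ Λ ∧ x ∈ WsF (Ωp x)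
  footp_uniq : ∀ x ∈ Wss, ∀ y ∈ Λ, x ∈ WsF y → y = Ωp x
  trans_sum : ∀ x ∈ Γ, tSpace Wus x ⊔ tSpace Wss x = ⊤
  trans_int : ∀ x ∈ Γ, tSpace Γ x = tSpace Wus x ⊓ tSpace Wss x
  fol_s : ∀ x ∈ Γ, tSpace Wss x = tSpace (WsF (Ωp x)) x ⊔ tSpace Γ x
  fol_s_indep : ∀ x ∈ Γ, tSpace (WsF (Ωp x)) x ⊓ tSpace Γ x = ⊥
  fol_u : ∀ x ∈ Γ, tSpace Wus x = tSpace (WuF (Ωm x)) x ⊔ tSpace Γ x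
  fol_u_indep : ∀ x ∈ Γ, tSpace (WuF (Ωm x)) x ⊓ tSpace Γ x = ⊥
  Um : Set (Euc m)
  Up : Set (Euc m)
  hUm : relOpenIn Λ Um
  hUp : relOpenIn Λ Up
  bijm : Set.BijOn Ωm Γ Um
  bijp : Set.BijOn Ωp Γ Up
  contm : ContinuousOn Ωm Γ
  contp : ContinuousOn Ωp Γ
  continvm : ContinuousOn (Function.invFunOn Ωm Γ) Um
  continvp : ContinuousOn (Function.invFunOn Ωp Γ) Up

/-- The scattering map `S^Γ = Ω₊^Γ ∘ (Ω₋^Γ)⁻¹ : U₋ → U₊` associated to a homoclinic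
channel. -/
def Channel.S {m : ℕ} {Λ Wus Wss : Set (Euc m)} {WuF WsF : Euc m → Set (Euc m)} {l : ℕ}
    (ch : Channel m Λ Wus Wss WuF WsF l) : Euc m → Euc m :=
  fun y => ch.Ωp (Function.invFunOn ch.Ωm ch.Γ y)
/-- A homoclinic channel for a flow. -/
abbrev FlowChannel {m : ℕ} (D : FlowNHIM m) :=
  Channel m D.Λ D.Wu D.Ws D.WuF D.WsF D.l

section Helpers
variable {m : ℕ} (D : FlowNHIM m)

lemma FlowNHIM.flow_cancel (s : ℝ) (x : Euc m) : D.Φ (-s) (D.Φ s x) = x := by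
  rw [← D.flow_add, neg_add_cancel, D.flow_zero]

lemma FlowNHIM.flow_cancel' (s : ℝ) (x : Euc m) : D.Φ s (D.Φ (-s) x) = x := by
  rw [← D.flow_add, add_neg_cancel, D.flow_zero]

lemma FlowNHIM.contPhi (t : ℝ) : Continuous (D.Φ t) :=
  D.smooth.continuous.comp (continuous_const.prodMk continuous_id)

lemma FlowNHIM.contPhi2 (x : Euc m) : Continuous fun t => D.Φ t x :=
  D.smooth.continuous.comp (continuous_id.prodMk continuous_const)

lemma FlowNHIM.diffPhi (t : ℝ) : Differentiable ℝ (D.Φ t) :=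
  (D.smooth.comp ((contDiff_const.prodMk contDiff_id) : ContDiff ℝ 2 fun x : Euc m => (t, x))).differentiable (by norm_num)

lemma FlowNHIM.flow_inj (s : ℝ) : Function.Injective (D.Φ s) :=
  Function.LeftInverse.injective (g := D.Φ (-s)) (D.flow_cancel s)

lemma FlowNHIM.flow_image_image (s : ℝ) (A : Set (Euc m)) :
    D.Φ (-s) '' (D.Φ s '' A) = A := by
  rw [← image_comp]
  have : D.Φ (-s) ∘ D.Φ s = id := funext fun x => D.flow_cancel s x
  rw [this, image_id]

lemma FlowNHIM.fderiv_flow_comp (s : ℝ) (x : Euc m) :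
    (fderiv ℝ (D.Φ (-s)) (D.Φ s x)).comp (fderiv ℝ (D.Φ s) x)
      = ContinuousLinearMap.id ℝ (Euc m) := by
  rw [← fderiv_comp x ((D.diffPhi (-s)) _) ((D.diffPhi s) _)]
  have : D.Φ (-s) ∘ D.Φ s = id := funext fun x => D.flow_cancel s x
  rw [this, fderiv_id]

lemma FlowNHIM.fderiv_flow_cancel (s : ℝ) (x : Euc m) (v : Euc m) :
    fderiv ℝ (D.Φ (-s)) (D.Φ s x) (fderiv ℝ (D.Φ s) x v) = v := by
  have := D.fderiv_flow_comp s x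
  have h2 := congrArg (fun L => (L : (Euc m →L[ℝ] Euc m)) v) this
  simpa using h2

lemma FlowNHIM.fderiv_flow_cancel' (s : ℝ) (x : Euc m) (v : Euc m) :
    fderiv ℝ (D.Φ s) x (fderiv ℝ (D.Φ (-s)) (D.Φ s x) v) = v := by
  have := D.fderiv_flow_cancel (-s) (D.Φ s x) v
  rw [neg_neg, D.flow_cancel] at this
  exact this

lemma FlowNHIM.fderiv_flow_inj (s : ℝ) (x : Euc m) :
    Function.Injective (fderiv ℝ (D.Φ s) x) :=
  Function.LeftInverse.injective (g := fderiv ℝ (D.Φ (-s)) (D.Φ s x))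
    (D.fderiv_flow_cancel s x)

end Helpers
section Shift

lemma shift_bound {g : ℝ → ℝ} (hg : Continuous g) (hnn : ∀ t, 0 ≤ g t)
    {a C₀ : ℝ} (s : ℝ) (ha : 0 < a) (hC₀ : 0 < C₀)
    (h : ∀ u : ℝ, u ≤ 0 → g u ≤ C₀ * Real.exp (a * u)) :
    ∃ C' > 0, ∀ t : ℝ, t ≤ 0 → g (t + s) ≤ C' * Real.exp (a * t) := by
  obtain ⟨M, hM⟩ := (isCompact_Icc (a := -|s|) (b := |s|)).exists_bound_of_continuousOn
    hg.continuousOn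
  refine ⟨max (C₀ * Real.exp (a * s)) ((max M 0 + 1) * Real.exp (a * |s|)), ?_, ?_⟩
  · exact lt_max_of_lt_left (by positivity)
  intro t ht
  rcases le_or_gt (t + s) 0 with hts | hts
  · calc g (t + s) ≤ C₀ * Real.exp (a * (t + s)) := h _ hts
      _ = (C₀ * Real.exp (a * s)) * Real.exp (a * t) := by
          rw [mul_add, Real.exp_add]; ring
      _ ≤ _ := by
          apply mul_le_mul_of_nonneg_right (le_max_left _ _) (Real.exp_nonneg _)
  · have hs : 0 < s := by linarith
    have habs : |s| = s := abs_of_pos hs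
    have h1 : t + s ∈ Icc (-|s|) |s| := by
      constructor
      · have : (0:ℝ) ≤ |s| := abs_nonneg s
        linarith
      · rw [habs]; linarith
    have h2 : g (t + s) ≤ max M 0 + 1 := by
      have := hM _ h1
      have : g (t + s) ≤ M := le_trans (le_abs_self _) this
      have hM0 : M ≤ max M 0 := le_max_left _ _
      linarith
    have h3 : (1:ℝ) ≤ Real.exp (a * |s|) * Real.exp (a * t) := by
      rw [← Real.exp_add, ← mul_add]
      apply Real.one_le_exp
      have : -|s| ≤ t := by rw [habs]; linarith
      nlinarith [abs_nonneg s]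
    calc g (t + s) ≤ max M 0 + 1 := h2
      _ ≤ (max M 0 + 1) * (Real.exp (a * |s|) * Real.exp (a * t)) := by
          nlinarith [le_max_right M 0]
      _ = ((max M 0 + 1) * Real.exp (a * |s|)) * Real.exp (a * t) := by ring
      _ ≤ _ := by
          apply mul_le_mul_of_nonneg_right (le_max_right _ _) (Real.exp_nonneg _)

lemma shift_bound' {g : ℝ → ℝ} (hg : Continuous g) (hnn : ∀ t, 0 ≤ g t)
    {a C₀ : ℝ} (s : ℝ) (ha : 0 < a) (hC₀ : 0 < C₀)
    (h : ∀ u : ℝ, 0 ≤ u → g u ≤ C₀ * Real.exp (-a * u)) :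
    ∃ C' > 0, ∀ t : ℝ, 0 ≤ t → g (t + s) ≤ C' * Real.exp (-a * t) := by
  obtain ⟨C', hC', hb⟩ := shift_bound (g := fun u => g (-u))
    (hg.comp continuous_neg) (fun t => hnn _) (-s) ha hC₀
    (fun u hu => by simpa [mul_comm] using h (-u) (by linarith))
  refine ⟨C', hC', fun t ht => ?_⟩
  have := hb (-t) (by linarith)
  simpa [neg_add, add_comm, mul_comm, neg_mul, mul_neg] using this

end Shift
section Equivariance
variable {m : ℕ} (D : FlowNHIM m)

lemma FlowNHIM.ha : 0 < D.aRate := lt_trans D.hb D.hba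

lemma FlowNHIM.mem_WuF_flow {x y : Euc m} (s : ℝ) (h : y ∈ D.WuF x) :
    D.Φ s y ∈ D.WuF (D.Φ s x) := by
  obtain ⟨Cxy, hCxy, hb⟩ := h
  obtain ⟨C', hC', hb'⟩ := shift_bound (g := fun u => dist (D.Φ u y) (D.Φ u x))
    ((D.contPhi2 y).dist (D.contPhi2 x)) (fun t => dist_nonneg) s D.ha hCxy hb
  exact ⟨C', hC', fun t ht => by
    rw [← D.flow_add, ← D.flow_add]; exact hb' t ht⟩

lemma FlowNHIM.mem_WsF_flow {x y : Euc m} (s : ℝ) (h : y ∈ D.WsF x) :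
    D.Φ s y ∈ D.WsF (D.Φ s x) := by
  obtain ⟨Cxy, hCxy, hb⟩ := h
  obtain ⟨C', hC', hb'⟩ := shift_bound' (g := fun u => dist (D.Φ u y) (D.Φ u x))
    ((D.contPhi2 y).dist (D.contPhi2 x)) (fun t => dist_nonneg) s D.ha hCxy hb
  exact ⟨C', hC', fun t ht => by
    rw [← D.flow_add, ← D.flow_add]; exact hb' t ht⟩

lemma FlowNHIM.mem_Wu_flow {y : Euc m} (s : ℝ) (h : y ∈ D.Wu) :
    D.Φ s y ∈ D.Wu := by
  obtain ⟨Cy, hCy, hb⟩ := h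
  obtain ⟨C', hC', hb'⟩ := shift_bound (g := fun u => Metric.infDist (D.Φ u y) D.Λ)
    ((Metric.continuous_infDist_pt D.Λ).comp (D.contPhi2 y))
    (fun t => Metric.infDist_nonneg) s D.ha hCy hb
  exact ⟨C', hC', fun t ht => by rw [← D.flow_add]; exact hb' t ht⟩

lemma FlowNHIM.mem_Ws_flow {y : Euc m} (s : ℝ) (h : y ∈ D.Ws) :
    D.Φ s y ∈ D.Ws := by
  obtain ⟨Cy, hCy, hb⟩ := h
  obtain ⟨C', hC', hb'⟩ := shift_bound' (g := fun u => Metric.infDist (D.Φ u y) D.Λ)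
    ((Metric.continuous_infDist_pt D.Λ).comp (D.contPhi2 y))
    (fun t => Metric.infDist_nonneg) s D.ha hCy hb
  exact ⟨C', hC', fun t ht => by rw [← D.flow_add]; exact hb' t ht⟩

lemma FlowNHIM.image_Wu (s : ℝ) : D.Φ s '' D.Wu = D.Wu := by
  apply Subset.antisymm
  · rintro _ ⟨y, hy, rfl⟩; exact D.mem_Wu_flow s hy
  · intro y hy
    exact ⟨D.Φ (-s) y, D.mem_Wu_flow (-s) hy, D.flow_cancel' s y⟩

lemma FlowNHIM.image_Ws (s : ℝ) : D.Φ s '' D.Ws = D.Ws := by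
  apply Subset.antisymm
  · rintro _ ⟨y, hy, rfl⟩; exact D.mem_Ws_flow s hy
  · intro y hy
    exact ⟨D.Φ (-s) y, D.mem_Ws_flow (-s) hy, D.flow_cancel' s y⟩

lemma FlowNHIM.image_WuF (s : ℝ) (x : Euc m) :
    D.Φ s '' D.WuF x = D.WuF (D.Φ s x) := by
  apply Subset.antisymm
  · rintro _ ⟨y, hy, rfl⟩; exact D.mem_WuF_flow s hy
  · intro y hy
    refine ⟨D.Φ (-s) y, ?_, D.flow_cancel' s y⟩
    have := D.mem_WuF_flow (-s) hy
    rwa [D.flow_cancel s x] at this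

lemma FlowNHIM.image_WsF (s : ℝ) (x : Euc m) :
    D.Φ s '' D.WsF x = D.WsF (D.Φ s x) := by
  apply Subset.antisymm
  · rintro _ ⟨y, hy, rfl⟩; exact D.mem_WsF_flow s hy
  · intro y hy
    refine ⟨D.Φ (-s) y, ?_, D.flow_cancel' s y⟩
    have := D.mem_WsF_flow (-s) hy
    rwa [D.flow_cancel s x] at this

lemma FlowNHIM.mem_L_flow {y : Euc m} (s : ℝ) (h : y ∈ D.Λ) :
    D.Φ s y ∈ D.Λ := by
  rw [← D.invΛ s]; exact mem_image_of_mem _ h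

end Equivariance
section Tangent
variable {m : ℕ} (D : FlowNHIM m)

lemma tSpace_map_le {u : Euc m → Euc m} (hu : Differentiable ℝ u)
    (B : Set (Euc m)) (y : Euc m) :
    (tSpace B y).map (fderiv ℝ u y : Euc m →ₗ[ℝ] Euc m) ≤ tSpace (u '' B) (u y) := by
  rw [tSpace, tSpace, Submodule.map_span]
  apply Submodule.span_mono
  rintro _ ⟨v, hv, rfl⟩
  exact (hu y).hasFDerivAt.hasFDerivWithinAt.mapsTo_tangent_cone hv

lemma FlowNHIM.tSpace_image (s : ℝ) {A B : Set (Euc m)} (hAB : D.Φ s '' A = B)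
    (x : Euc m) :
    tSpace B (D.Φ s x) = (tSpace A x).map (fderiv ℝ (D.Φ s) x : Euc m →ₗ[ℝ] Euc m) := by
  subst hAB
  apply le_antisymm
  · intro v hv
    have h1 : (fderiv ℝ (D.Φ (-s)) (D.Φ s x)) v ∈ tSpace A x := by
      have hle := tSpace_map_le (D.diffPhi (-s)) (D.Φ s '' A) (D.Φ s x)
      rw [D.flow_image_image, D.flow_cancel] at hle
      exact hle (Submodule.mem_map_of_mem hv)
    exact Submodule.mem_map.2 ⟨_, h1, D.fderiv_flow_cancel' s x v⟩
  · exact tSpace_map_le (D.diffPhi s) A x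

lemma FlowNHIM.finrank_fderiv_map (s : ℝ) (x : Euc m) (p : Submodule ℝ (Euc m)) :
    Module.finrank ℝ (p.map (fderiv ℝ (D.Φ s) x : Euc m →ₗ[ℝ] Euc m)) = Module.finrank ℝ p :=
  (LinearEquiv.finrank_eq
    (Submodule.equivMapOfInjective (fderiv ℝ (D.Φ s) x : Euc m →ₗ[ℝ] Euc m) (D.fderiv_flow_inj s x) p)).symm

lemma FlowNHIM.map_fderiv_top (s : ℝ) (x : Euc m) :
    Submodule.map (fderiv ℝ (D.Φ s) x : Euc m →ₗ[ℝ] Euc m) ⊤ = ⊤ := by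
  rw [Submodule.map_top, LinearMap.range_eq_top]
  intro v
  exact ⟨fderiv ℝ (D.Φ (-s)) (D.Φ s x) v, D.fderiv_flow_cancel' s x v⟩

end Tangent
section InvAux
variable {m : ℕ} (D : FlowNHIM m)

lemma FlowNHIM.bij_aux (s : ℝ) {Ω : Euc m → Euc m} {Γ U : Set (Euc m)}
    (hbij : Set.BijOn Ω Γ U) :
    Set.BijOn (fun x => D.Φ s (Ω (D.Φ (-s) x))) (D.Φ s '' Γ) (D.Φ s '' U) := by
  have h1 : Set.BijOn (D.Φ s) U (D.Φ s '' U) := (D.flow_inj s).injOn.bijOn_image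
  have h2 : Set.BijOn (D.Φ (-s)) (D.Φ s '' Γ) Γ := by
    have := (D.flow_inj (-s)).injOn.bijOn_image (s := D.Φ s '' Γ)
    rwa [D.flow_image_image] at this
  exact (h1.comp hbij).comp h2

lemma FlowNHIM.continv_aux (s : ℝ) {Ω : Euc m → Euc m} {Γ U : Set (Euc m)}
    (hbij : Set.BijOn Ω Γ U) (hcont : ContinuousOn (Function.invFunOn Ω Γ) U) :
    ContinuousOn (Function.invFunOn (fun x => D.Φ s (Ω (D.Φ (-s) x))) (D.Φ s '' Γ))
      (D.Φ s '' U) := by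
  have hbij' := D.bij_aux s hbij
  have heq : Set.EqOn
      (Function.invFunOn (fun x => D.Φ s (Ω (D.Φ (-s) x))) (D.Φ s '' Γ))
      (fun y => D.Φ s (Function.invFunOn Ω Γ (D.Φ (-s) y))) (D.Φ s '' U) := by
    rintro _ ⟨y, hy, rfl⟩
    obtain ⟨x₀, hx₀Γ, hx₀y⟩ := hbij.surjOn hy
    have hFx : (fun x => D.Φ s (Ω (D.Φ (-s) x))) (D.Φ s x₀) = D.Φ s y := by
      simp only [D.flow_cancel s x₀, hx₀y]
    have hmem : ∃ a ∈ D.Φ s '' Γ,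
        (fun x => D.Φ s (Ω (D.Φ (-s) x))) a = D.Φ s y :=
      ⟨D.Φ s x₀, mem_image_of_mem _ hx₀Γ, hFx⟩
    have hz1 := Function.invFunOn_mem hmem
    have hz2 := Function.invFunOn_eq hmem
    have hzx := hbij'.injOn hz1 (mem_image_of_mem _ hx₀Γ) (hz2.trans hFx.symm)
    rw [hzx]
    show D.Φ s x₀ = D.Φ s (Function.invFunOn Ω Γ (D.Φ (-s) (D.Φ s y)))
    rw [D.flow_cancel s y]
    have hmem0 : ∃ a ∈ Γ, Ω a = y := ⟨x₀, hx₀Γ, hx₀y⟩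
    exact congrArg (D.Φ s) (hbij.injOn hx₀Γ (Function.invFunOn_mem hmem0)
      (hx₀y.trans (Function.invFunOn_eq hmem0).symm))
  have hmaps : Set.MapsTo (D.Φ (-s)) (D.Φ s '' U) U := by
    rintro _ ⟨x, hx, rfl⟩; rw [D.flow_cancel]; exact hx
  exact ContinuousOn.congr
    ((D.contPhi s).comp_continuousOn
      (hcont.comp (D.contPhi (-s)).continuousOn hmaps)) heq

end InvAux
section Transport
variable {m : ℕ} (D : FlowNHIM m)

/-- Transport of a homoclinic channel by the flow. -/
def FlowNHIM.chFlow (ch : FlowChannel D) (s : ℝ) : FlowChannel D where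
  Γ := D.Φ s '' ch.Γ
  sub := by
    rintro _ ⟨x, hx, rfl⟩
    exact ⟨D.mem_Wu_flow s (ch.sub hx).1, D.mem_Ws_flow s (ch.sub hx).2⟩
  dimΓ := by
    rintro _ ⟨x, hx, rfl⟩
    rw [D.tSpace_image s rfl x, D.finrank_fderiv_map]
    exact ch.dimΓ x hx
  Ωm := fun x => D.Φ s (ch.Ωm (D.Φ (-s) x))
  Ωp := fun x => D.Φ s (ch.Ωp (D.Φ (-s) x))
  footm := by
    intro x hx
    have hgx : D.Φ (-s) x ∈ D.Wu := D.mem_Wu_flow (-s) hx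
    obtain ⟨h1, h2⟩ := ch.footm _ hgx
    refine ⟨D.mem_L_flow s h1, ?_⟩
    have := D.mem_WuF_flow s h2
    rwa [D.flow_cancel' s x] at this
  footm_uniq := by
    intro x hx y hy hxy
    have h1 : D.Φ (-s) x ∈ D.WuF (D.Φ (-s) y) := D.mem_WuF_flow (-s) hxy
    have h2 := ch.footm_uniq _ (D.mem_Wu_flow (-s) hx) _ (D.mem_L_flow (-s) hy) h1
    show y = D.Φ s (ch.Ωm (D.Φ (-s) x))
    rw [← h2, D.flow_cancel' s y]
  footp := by
    intro x hx
    have hgx : D.Φ (-s) x ∈ D.Ws := D.mem_Ws_flow (-s) hx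
    obtain ⟨h1, h2⟩ := ch.footp _ hgx
    refine ⟨D.mem_L_flow s h1, ?_⟩
    have := D.mem_WsF_flow s h2
    rwa [D.flow_cancel' s x] at this
  footp_uniq := by
    intro x hx y hy hxy
    have h1 : D.Φ (-s) x ∈ D.WsF (D.Φ (-s) y) := D.mem_WsF_flow (-s) hxy
    have h2 := ch.footp_uniq _ (D.mem_Ws_flow (-s) hx) _ (D.mem_L_flow (-s) hy) h1
    show y = D.Φ s (ch.Ωp (D.Φ (-s) x))
    rw [← h2, D.flow_cancel' s y]
  trans_sum := by
    rintro _ ⟨x, hx, rfl⟩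
    rw [D.tSpace_image s (D.image_Wu s) x, D.tSpace_image s (D.image_Ws s) x,
      ← Submodule.map_sup, ch.trans_sum x hx, D.map_fderiv_top]
  trans_int := by
    rintro _ ⟨x, hx, rfl⟩
    rw [D.tSpace_image s rfl x, D.tSpace_image s (D.image_Wu s) x,
      D.tSpace_image s (D.image_Ws s) x, ch.trans_int x hx,
      Submodule.map_inf _ (D.fderiv_flow_inj s x)]
  fol_s := by
    rintro _ ⟨x, hx, rfl⟩
    show tSpace D.Ws (D.Φ s x) =
      tSpace (D.WsF (D.Φ s (ch.Ωp (D.Φ (-s) (D.Φ s x))))) (D.Φ s x) ⊔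
        tSpace (D.Φ s '' ch.Γ) (D.Φ s x)
    rw [D.flow_cancel s x, D.tSpace_image s (D.image_Ws s) x,
      D.tSpace_image s (D.image_WsF s (ch.Ωp x)) x, D.tSpace_image s rfl x,
      ← Submodule.map_sup, ch.fol_s x hx]
  fol_s_indep := by
    rintro _ ⟨x, hx, rfl⟩
    show tSpace (D.WsF (D.Φ s (ch.Ωp (D.Φ (-s) (D.Φ s x))))) (D.Φ s x) ⊓
        tSpace (D.Φ s '' ch.Γ) (D.Φ s x) = ⊥
    rw [D.flow_cancel s x, D.tSpace_image s (D.image_WsF s (ch.Ωp x)) x,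
      D.tSpace_image s rfl x, ← Submodule.map_inf _ (D.fderiv_flow_inj s x),
      ch.fol_s_indep x hx, Submodule.map_bot]
  fol_u := by
    rintro _ ⟨x, hx, rfl⟩
    show tSpace D.Wu (D.Φ s x) =
      tSpace (D.WuF (D.Φ s (ch.Ωm (D.Φ (-s) (D.Φ s x))))) (D.Φ s x) ⊔
        tSpace (D.Φ s '' ch.Γ) (D.Φ s x)
    rw [D.flow_cancel s x, D.tSpace_image s (D.image_Wu s) x,
      D.tSpace_image s (D.image_WuF s (ch.Ωm x)) x, D.tSpace_image s rfl x,
      ← Submodule.map_sup, ch.fol_u x hx]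
  fol_u_indep := by
    rintro _ ⟨x, hx, rfl⟩
    show tSpace (D.WuF (D.Φ s (ch.Ωm (D.Φ (-s) (D.Φ s x))))) (D.Φ s x) ⊓
        tSpace (D.Φ s '' ch.Γ) (D.Φ s x) = ⊥
    rw [D.flow_cancel s x, D.tSpace_image s (D.image_WuF s (ch.Ωm x)) x,
      D.tSpace_image s rfl x, ← Submodule.map_inf _ (D.fderiv_flow_inj s x),
      ch.fol_u_indep x hx, Submodule.map_bot]
  Um := D.Φ s '' ch.Um
  Up := D.Φ s '' ch.Up
  hUm := by
    obtain ⟨V, hV, hVU⟩ := ch.hUm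
    refine ⟨D.Φ (-s) ⁻¹' V, hV.preimage (D.contPhi (-s)), ?_⟩
    rw [hVU, Set.image_inter (D.flow_inj s), D.invΛ s,
      Set.image_eq_preimage_of_inverse (D.flow_cancel s) (D.flow_cancel' s)]
  hUp := by
    obtain ⟨V, hV, hVU⟩ := ch.hUp
    refine ⟨D.Φ (-s) ⁻¹' V, hV.preimage (D.contPhi (-s)), ?_⟩
    rw [hVU, Set.image_inter (D.flow_inj s), D.invΛ s,
      Set.image_eq_preimage_of_inverse (D.flow_cancel s) (D.flow_cancel' s)]
  bijm := by
    have h1 : Set.BijOn (D.Φ s) ch.Um (D.Φ s '' ch.Um) :=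
      (D.flow_inj s).injOn.bijOn_image
    have h2 : Set.BijOn (D.Φ (-s)) (D.Φ s '' ch.Γ) ch.Γ := by
      have := (D.flow_inj (-s)).injOn.bijOn_image (s := D.Φ s '' ch.Γ)
      rwa [D.flow_image_image] at this
    exact (h1.comp ch.bijm).comp h2
  bijp := by
    have h1 : Set.BijOn (D.Φ s) ch.Up (D.Φ s '' ch.Up) :=
      (D.flow_inj s).injOn.bijOn_image
    have h2 : Set.BijOn (D.Φ (-s)) (D.Φ s '' ch.Γ) ch.Γ := by
      have := (D.flow_inj (-s)).injOn.bijOn_image (s := D.Φ s '' ch.Γ)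
      rwa [D.flow_image_image] at this
    exact (h1.comp ch.bijp).comp h2
  contm := by
    have hmaps : Set.MapsTo (D.Φ (-s)) (D.Φ s '' ch.Γ) ch.Γ := by
      rintro _ ⟨x, hx, rfl⟩; rw [D.flow_cancel]; exact hx
    exact (D.contPhi s).comp_continuousOn
      (ch.contm.comp (D.contPhi (-s)).continuousOn hmaps)
  contp := by
    have hmaps : Set.MapsTo (D.Φ (-s)) (D.Φ s '' ch.Γ) ch.Γ := by
      rintro _ ⟨x, hx, rfl⟩; rw [D.flow_cancel]; exact hx
    exact (D.contPhi s).comp_continuousOn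
      (ch.contp.comp (D.contPhi (-s)).continuousOn hmaps)
  continvm := D.continv_aux s ch.bijm ch.continvm
  continvp := D.continv_aux s ch.bijp ch.continvp

end Transport
section Main
variable {m : ℕ} (D : FlowNHIM m)

lemma FlowNHIM.Ωm_flow (ch : FlowChannel D) {x : Euc m} (hx : x ∈ D.Wu) (s : ℝ) :
    ch.Ωm (D.Φ s x) = D.Φ s (ch.Ωm x) :=
  (ch.footm_uniq (D.Φ s x) (D.mem_Wu_flow s hx) (D.Φ s (ch.Ωm x))
    (D.mem_L_flow s (ch.footm x hx).1) (D.mem_WuF_flow s (ch.footm x hx).2)).symm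

lemma FlowNHIM.Ωp_flow (ch : FlowChannel D) {x : Euc m} (hx : x ∈ D.Ws) (s : ℝ) :
    ch.Ωp (D.Φ s x) = D.Φ s (ch.Ωp x) :=
  (ch.footp_uniq (D.Φ s x) (D.mem_Ws_flow s hx) (D.Φ s (ch.Ωp x))
    (D.mem_L_flow s (ch.footp x hx).1) (D.mem_WsF_flow s (ch.footp x hx).2)).symm

lemma FlowNHIM.Ωm_agree (ch ch' : FlowChannel D) {x : Euc m} (hx : x ∈ D.Wu) :
    ch'.Ωm x = ch.Ωm x :=
  ch.footm_uniq x hx _ (ch'.footm x hx).1 (ch'.footm x hx).2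

lemma FlowNHIM.Ωp_agree (ch ch' : FlowChannel D) {x : Euc m} (hx : x ∈ D.Ws) :
    ch'.Ωp x = ch.Ωp x :=
  ch.footp_uniq x hx _ (ch'.footp x hx).1 (ch'.footp x hx).2

end Main

/-- **Iterated homoclinic channels and the explicit formula for the scattering map of a
flow.**  Let `Λ` be a normally hyperbolic invariant manifold for the flow `Φ` and `Γ` a
homoclinic channel with scattering map `S^Γ`.  Then for any `t_u, t_s > 0` the sets
`Φ^{-t_u}(Γ)` and `Φ^{t_s}(Γ)` are also homoclinic channels, and
`S^Γ = Φ^{-t_s} ∘ Ω₊^{Φ^{t_s}(Γ)} ∘ Φ^{t_s+t_u} ∘ (Ω₋^{Φ^{-t_u}(Γ)})⁻¹ ∘ Φ^{-t_u}` on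
`U₋ = Ω₋^Γ(Γ)`. -/
theorem scattering_map_formula_flow {m : ℕ} (D : FlowNHIM m) (ch : FlowChannel D)
    (tu ts : ℝ) (htu : 0 < tu) (hts : 0 < ts) :
    (∃ chu : FlowChannel D, chu.Γ = D.Φ (-tu) '' ch.Γ) ∧
    (∃ chs : FlowChannel D, chs.Γ = D.Φ ts '' ch.Γ) ∧
    (∀ chu chs : FlowChannel D,
      chu.Γ = D.Φ (-tu) '' ch.Γ → chs.Γ = D.Φ ts '' ch.Γ →
      ∀ y ∈ ch.Um,
        ch.S y =
          D.Φ (-ts) (chs.Ωp (D.Φ (ts + tu)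
            (Function.invFunOn chu.Ωm chu.Γ (D.Φ (-tu) y))))) := by
  refine ⟨⟨D.chFlow ch (-tu), rfl⟩, ⟨D.chFlow ch ts, rfl⟩, ?_⟩
  intro chu chs hΓu hΓs y hy
  obtain ⟨a, ha, hay⟩ := ch.bijm.surjOn hy
  have hmem0 : ∃ a ∈ ch.Γ, ch.Ωm a = y := ⟨a, ha, hay⟩
  set x₀ := Function.invFunOn ch.Ωm ch.Γ y with hx₀def
  have hx₀Γ : x₀ ∈ ch.Γ := Function.invFunOn_mem hmem0
  have hΩ : ch.Ωm x₀ = y := Function.invFunOn_eq hmem0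
  have hxu : x₀ ∈ D.Wu := (ch.sub hx₀Γ).1
  have hxs : x₀ ∈ D.Ws := (ch.sub hx₀Γ).2
  -- key: chu.Ωm (Φ (-tu) x₀) = Φ (-tu) y
  have key1 : chu.Ωm (D.Φ (-tu) x₀) = D.Φ (-tu) y := by
    rw [D.Ωm_agree ch chu (D.mem_Wu_flow (-tu) hxu), D.Ωm_flow ch hxu, hΩ]
  have hx₀Γ' : D.Φ (-tu) x₀ ∈ chu.Γ := by
    rw [hΓu]; exact mem_image_of_mem _ hx₀Γ
  have hmem1 : ∃ a ∈ chu.Γ, chu.Ωm a = D.Φ (-tu) y := ⟨_, hx₀Γ', key1⟩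
  have hz1 : Function.invFunOn chu.Ωm chu.Γ (D.Φ (-tu) y) ∈ chu.Γ :=
    Function.invFunOn_mem hmem1
  have hz2 : chu.Ωm (Function.invFunOn chu.Ωm chu.Γ (D.Φ (-tu) y)) = D.Φ (-tu) y :=
    Function.invFunOn_eq hmem1
  have hzx : Function.invFunOn chu.Ωm chu.Γ (D.Φ (-tu) y) = D.Φ (-tu) x₀ :=
    chu.bijm.injOn hz1 hx₀Γ' (hz2.trans key1.symm)
  have hts' : D.Φ (ts + tu) (D.Φ (-tu) x₀) = D.Φ ts x₀ := by
    rw [← D.flow_add]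
    norm_num
  have hws : D.Φ ts x₀ ∈ D.Ws := D.mem_Ws_flow ts hxs
  have key2 : chs.Ωp (D.Φ ts x₀) = D.Φ ts (ch.Ωp x₀) := by
    rw [D.Ωp_agree ch chs hws, D.Ωp_flow ch hxs]
  rw [hzx, hts', key2, D.flow_cancel]
  rfl
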